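/- Let (Y₁,d₁) and (Y₂,d₂) be δ-hyperbolic geodesic metric spaces. Let μ₁ be a geodesic segment in Y₁ joining a and b, let p ∈ Y₁, and let q ∈ μ₁ be a nearest point of μ₁ to p, i.e. d₁(p,q) ≤ d₁(p,x) for all x ∈ μ₁. Let φ : Y₁ → Y₂ be a (K,ε)-quasi-isometric embedding, let μ₂ be a geodesic segment in Y₂ joining φ(a) and φ(b), and let r ∈ μ₂ be a nearest point of μ₂ to φ(p), i.e. d₂(φ(p),r) ≤ d₂(φ(p),x) for all x ∈ μ₂. Then d₂(r, φ(q)) ≤ C₄ for some constant C₄ depending only on K, ε and δ. -/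
import Mathlib


open Set
open scoped Classical ENNReal

/-- `γ` is a geodesic segment from `x` to `y`, parametrized by arclength on `[0, dist x y]`. -/
def IsGeodesicSeg {X : Type} [MetricSpace X] (γ : ℝ → X) (x y : X) : Prop :=
  γ 0 = x ∧ γ (dist x y) = y ∧
    ∀ s ∈ Set.Icc (0 : ℝ) (dist x y), ∀ t ∈ Set.Icc (0 : ℝ) (dist x y),
      dist (γ s) (γ t) = |s - t|

/-- The image (underlying set) of a geodesic segment from `x` to `y`. -/
def geodImage {X : Type} [MetricSpace X] (γ : ℝ → X) (x y : X) : Set X :=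
  γ '' Set.Icc (0 : ℝ) (dist x y)

/-- A geodesic metric space: any two points are joined by a geodesic segment. -/
def GeodesicMS (X : Type) [MetricSpace X] : Prop :=
  ∀ x y : X, ∃ γ : ℝ → X, IsGeodesicSeg γ x y

/-- `X` is δ-hyperbolic: all geodesic triangles are δ-thin, i.e. each side lies in the
δ-neighborhood of the union of the other two sides. -/
def DeltaHyperbolic (X : Type) [MetricSpace X] (δ : ℝ) : Prop :=
  ∀ (x y z : X) (γ₁ γ₂ γ₃ : ℝ → X),
    IsGeodesicSeg γ₁ x y → IsGeodesicSeg γ₂ y z → IsGeodesicSeg γ₃ x z →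
    ∀ p ∈ geodImage γ₃ x z, ∃ q ∈ geodImage γ₁ x y ∪ geodImage γ₂ y z, dist p q ≤ δ

/-- A subset `Z` is C-quasiconvex: every geodesic segment joining two points of `Z` lies
in the C-neighborhood of `Z`. -/
def QuasiconvexSubset {X : Type} [MetricSpace X] (C : ℝ) (Z : Set X) : Prop :=
  ∀ x ∈ Z, ∀ y ∈ Z, ∀ γ : ℝ → X, IsGeodesicSeg γ x y →
    ∀ p ∈ geodImage γ x y, ∃ z ∈ Z, dist p z ≤ C

/-- A collection of subsets is D-separated: distinct members are at distance at least `D`. -/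
def SeparatedColl {X : Type} [MetricSpace X] (D : ℝ) (𝓗 : Set (Set X)) : Prop :=
  ∀ H₁ ∈ 𝓗, ∀ H₂ ∈ 𝓗, H₁ ≠ H₂ → ∀ a ∈ H₁, ∀ b ∈ H₂, D ≤ dist a b

open Metric Topology Filter

set_option maxHeartbeats 1000000

variable {X : Type} [MetricSpace X]

lemma geo_contOn {γ : ℝ → X} {x y : X} (h : IsGeodesicSeg γ x y) :
    ContinuousOn γ (Icc 0 (dist x y)) := by
  have : LipschitzOnWith 1 γ (Icc 0 (dist x y)) := by
    rw [lipschitzOnWith_iff_dist_le_mul]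
    intro a ha b hb
    rw [h.2.2 a ha b hb, Real.dist_eq]
    simp
  exact this.continuousOn

lemma geo_mem {γ : ℝ → X} {x y : X} (h : IsGeodesicSeg γ x y) {t : ℝ}
    (ht : t ∈ Icc 0 (dist x y)) : γ t ∈ geodImage γ x y := ⟨t, ht, rfl⟩

lemma geo_x_mem {γ : ℝ → X} {x y : X} (h : IsGeodesicSeg γ x y) : x ∈ geodImage γ x y :=
  ⟨0, ⟨le_refl _, dist_nonneg⟩, h.1⟩

lemma geo_y_mem {γ : ℝ → X} {x y : X} (h : IsGeodesicSeg γ x y) : y ∈ geodImage γ x y :=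
  ⟨dist x y, ⟨dist_nonneg, le_refl _⟩, h.2.1⟩

lemma geo_dist_from_start {γ : ℝ → X} {x y : X} (h : IsGeodesicSeg γ x y) {t : ℝ}
    (ht : t ∈ Icc 0 (dist x y)) : dist x (γ t) = t := by
  have := h.2.2 0 ⟨le_refl _, dist_nonneg⟩ t ht
  rw [h.1] at this
  rw [this, abs_of_nonpos (by linarith [ht.1])]; ring

lemma geo_dist_to_end {γ : ℝ → X} {x y : X} (h : IsGeodesicSeg γ x y) {t : ℝ}
    (ht : t ∈ Icc 0 (dist x y)) : dist (γ t) y = dist x y - t := by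
  have := h.2.2 t ht (dist x y) ⟨dist_nonneg, le_refl _⟩
  rw [h.2.1] at this
  rw [this, abs_of_nonpos (by linarith [ht.2])]; ring

lemma geo_compact {γ : ℝ → X} {x y : X} (h : IsGeodesicSeg γ x y) :
    IsCompact (geodImage γ x y) := isCompact_Icc.image_of_continuousOn (geo_contOn h)

lemma geo_nonempty {γ : ℝ → X} {x y : X} (h : IsGeodesicSeg γ x y) :
    (geodImage γ x y).Nonempty := ⟨x, geo_x_mem h⟩

/-- Restriction of a geodesic between two parameters, as a geodesic. -/
lemma geo_sub {γ : ℝ → X} {x y : X} (h : IsGeodesicSeg γ x y) {u v : ℝ}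
    (hu : u ∈ Icc 0 (dist x y)) (hv : v ∈ Icc 0 (dist x y)) :
    ∃ ρ : ℝ → X, IsGeodesicSeg ρ (γ u) (γ v) ∧
      (∀ t ∈ Icc 0 (dist (γ u) (γ v)), ρ t ∈ geodImage γ x y) ∧
      (∀ t' ∈ Icc (min u v) (max u v), γ t' ∈ geodImage ρ (γ u) (γ v)) := by
  have hd : dist (γ u) (γ v) = |u - v| := h.2.2 u hu v hv
  rcases le_total u v with huv | huv
  · refine ⟨fun t => γ (u + t), ⟨by simp, ?_, ?_⟩, ?_, ?_⟩
    · rw [hd, abs_of_nonpos (by linarith)]; ring_nf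
    · intro s hs t ht
      rw [hd, abs_of_nonpos (by linarith)] at hs ht
      have hsm : u + s ∈ Icc 0 (dist x y) := ⟨by linarith [hs.1, hu.1], by linarith [hs.2, hv.2]⟩
      have htm : u + t ∈ Icc 0 (dist x y) := ⟨by linarith [ht.1, hu.1], by linarith [ht.2, hv.2]⟩
      rw [h.2.2 _ hsm _ htm]
      congr 1; ring
    · intro t ht
      rw [hd, abs_of_nonpos (by linarith)] at ht
      exact ⟨u + t, ⟨by linarith [ht.1, hu.1], by linarith [ht.2, hv.2]⟩, rfl⟩
    · intro t' ht'
      rw [min_eq_left huv, max_eq_right huv] at ht'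
      refine ⟨t' - u, ?_, by show γ (u + (t' - u)) = γ t'; congr 1; ring⟩
      rw [hd, abs_of_nonpos (by linarith)]
      exact ⟨by linarith [ht'.1], by linarith [ht'.2]⟩
  · refine ⟨fun t => γ (u - t), ⟨by simp, ?_, ?_⟩, ?_, ?_⟩
    · rw [hd, abs_of_nonneg (by linarith)]; ring_nf
    · intro s hs t ht
      rw [hd, abs_of_nonneg (by linarith)] at hs ht
      have hsm : u - s ∈ Icc 0 (dist x y) := ⟨by linarith [hs.2, hv.1], by linarith [hs.1, hu.2]⟩
      have htm : u - t ∈ Icc 0 (dist x y) := ⟨by linarith [ht.2, hv.1], by linarith [ht.1, hu.2]⟩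
      rw [h.2.2 _ hsm _ htm]
      rw [abs_sub_comm]; congr 1; ring
    · intro t ht
      rw [hd, abs_of_nonneg (by linarith)] at ht
      exact ⟨u - t, ⟨by linarith [ht.2, hv.1], by linarith [ht.1, hu.2]⟩, rfl⟩
    · intro t' ht'
      rw [min_eq_right huv, max_eq_left huv] at ht'
      refine ⟨u - t', ?_, by show γ (u - (u - t')) = γ t'; congr 1; ring⟩
      rw [hd, abs_of_nonneg (by linarith)]
      exact ⟨by linarith [ht'.2], by linarith [ht'.1]⟩

/-- Reversal of a geodesic. -/
lemma geo_rev {γ : ℝ → X} {x y : X} (h : IsGeodesicSeg γ x y) :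
    IsGeodesicSeg (fun t => γ (dist x y - t)) y x ∧
      (geodImage (fun t => γ (dist x y - t)) y x = geodImage γ x y) := by
  have hc : dist y x = dist x y := dist_comm y x
  constructor
  · refine ⟨by simp [h.2.1], by simp [hc, h.1], ?_⟩
    intro s hs t ht
    rw [hc] at hs ht
    have hsm : dist x y - s ∈ Icc 0 (dist x y) := ⟨by linarith [hs.2], by linarith [hs.1]⟩
    have htm : dist x y - t ∈ Icc 0 (dist x y) := ⟨by linarith [ht.2], by linarith [ht.1]⟩
    rw [h.2.2 _ hsm _ htm, abs_sub_comm]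
    congr 1; ring
  · unfold geodImage
    rw [hc]
    ext w
    constructor
    · rintro ⟨t, ht, rfl⟩
      exact ⟨dist x y - t, ⟨by linarith [ht.2], by linarith [ht.1]⟩, rfl⟩
    · rintro ⟨t, ht, rfl⟩
      exact ⟨dist x y - t, ⟨by linarith [ht.2], by linarith [ht.1]⟩, by simp⟩

lemma nat_sq_le (k : ℕ) : k^2 + 2 ≤ 4 * 2^k := by
  induction k with
  | zero => norm_num
  | succ n ih =>
    have h1 : (n+1)^2 + 2 ≤ 2*(n^2+2) := by nlinarith [sq_nonneg (n-1), Nat.sub_le n 1]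
    calc (n+1)^2 + 2 ≤ 2*(n^2+2) := h1
      _ ≤ 2*(4*2^n) := by omega
      _ = 4*2^(n+1) := by ring

lemma nat_sq_le' (k : ℕ) : ((k:ℝ))^2 + 2 ≤ 4 * 2^k := by
  have := nat_sq_le k
  have : ((k^2 + 2 : ℕ) : ℝ) ≤ ((4 * 2^k : ℕ) : ℝ) := by exact_mod_cast this
  push_cast at this
  linarith

lemma exists_pow_between (n : ℕ) : ∃ k : ℕ, n ≤ 2^k ∧ 2^k ≤ 2*n + 2 := by
  induction n with
  | zero => exact ⟨0, by norm_num, by norm_num⟩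
  | succ m ih =>
    obtain ⟨k, hk1, hk2⟩ := ih
    by_cases h : m + 1 ≤ 2^k
    · exact ⟨k, h, by omega⟩
    · refine ⟨k+1, ?_, ?_⟩
      · have : 2^k ≤ m := by omega
        calc m+1 ≤ 2^k + 1 := by omega
          _ ≤ 2^(k+1) := by have := Nat.one_le_two_pow (n := k); omega
      · have : 2^k ≤ m := by omega
        calc 2^(k+1) = 2*2^k := by ring
          _ ≤ 2*(m+1)+2 := by omega

/-- distance along a chain is at most s times the index gap -/
lemma chain_upper {X : Type} [MetricSpace X] {c : ℕ → X} {n : ℕ} {s : ℝ}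
    (hst : ∀ i < n, dist (c i) (c (i+1)) ≤ s) :
    ∀ i j, i ≤ j → j ≤ n → dist (c i) (c j) ≤ s * (j - i : ℕ) := by
  intro i j hij hjn
  induction j with
  | zero => simp_all
  | succ m ih =>
    rcases Nat.eq_or_lt_of_le hij with h | h
    · simp [h]
    · have him : i ≤ m := by omega
      have : dist (c i) (c (m+1)) ≤ dist (c i) (c m) + dist (c m) (c (m+1)) := dist_triangle _ _ _
      have h2 := ih him (by omega)
      have h3 := hst m (by omega)
      have : dist (c i) (c (m+1)) ≤ s * (m - i : ℕ) + s := by linarith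
      have hcast : ((m+1-i : ℕ) : ℝ) = ((m-i : ℕ) : ℝ) + 1 := by
        have : m + 1 - i = (m - i) + 1 := by omega
        rw [this]; push_cast; ring
      rw [hcast]; linarith

/-- Lemma B: dyadic approximation of points on a geodesic by chain points. -/
lemma lemB {X : Type} [MetricSpace X] (geo : GeodesicMS X) {Δ : ℝ} (hyp : DeltaHyperbolic X Δ)
    {s : ℝ} (hs : 0 ≤ s) :
    ∀ (k n : ℕ), n ≤ 2^k → ∀ c : ℕ → X, (∀ i < n, dist (c i) (c (i+1)) ≤ s) →
    ∀ γ : ℝ → X, IsGeodesicSeg γ (c 0) (c n) →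
    ∀ w ∈ geodImage γ (c 0) (c n), ∃ i ≤ n, dist w (c i) ≤ Δ * k + s/2 := by
  intro k
  induction k with
  | zero =>
    intro n hn c hst γ hγ w hw
    interval_cases n
    · obtain ⟨t, ht, rfl⟩ := hw
      have h0 : dist (c 0) (c 0) = 0 := dist_self _
      rw [h0] at ht
      have : t = 0 := le_antisymm ht.2 ht.1
      subst this
      rw [hγ.1]
      simp
      linarith
    · obtain ⟨t, ht, rfl⟩ := hw
      have h1 := geo_dist_from_start hγ ht
      have h2 := geo_dist_to_end hγ ht
      have hd01 := hst 0 (by norm_num)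
      rcases le_total t (dist (c 0) (c 1) / 2) with h | h
      · refine ⟨0, by norm_num, ?_⟩
        rw [dist_comm, h1]
        push_cast
        linarith [ht.1]
      · refine ⟨1, le_refl _, ?_⟩
        rw [h2]
        push_cast
        linarith [ht.2]
  | succ k ih =>
    intro n hn c hst γ hγ w hw
    by_cases hsmall : n ≤ 2^k
    · obtain ⟨i, hi, hd⟩ := ih n hsmall c hst γ hγ w hw
      refine ⟨i, hi, ?_⟩
      have hΔ : 0 ≤ Δ := by
        -- Δ-hyperbolicity of a nonempty space forces Δ ≥ 0
        obtain ⟨σ, hσ⟩ := geo (c 0) (c 0)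
        obtain ⟨q, hq, hdq⟩ := hyp (c 0) (c 0) (c 0) σ σ σ hσ hσ hσ (c 0) (geo_x_mem hσ)
        have : dist (c 0) q = 0 := by
          rcases hq with hq | hq <;>
          · obtain ⟨t, ht, rfl⟩ := hq
            have hd0 : dist (c 0) (c 0) = 0 := dist_self _
            rw [hd0] at ht
            have : t = 0 := le_antisymm ht.2 ht.1
            subst this
            rw [hσ.1]; simp
        linarith [this ▸ hdq]
      push_cast
      linarith
    · set h := n / 2 with hh
      have hn2 : 1 ≤ n := by
        have := Nat.one_le_two_pow (n := k)
        by_contra hc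
        push_neg at hc
        omega
      have hh1 : h ≤ 2^k := by
        have : n ≤ 2^(k+1) := hn
        omega
      have hh2 : n - h ≤ 2^k := by omega
      have hhn : h ≤ n := Nat.div_le_self n 2
      -- geodesics for the two halves
      obtain ⟨σ₁, hσ₁⟩ := geo (c 0) (c h)
      obtain ⟨σ₂, hσ₂⟩ := geo (c h) (c n)
      obtain ⟨w', hw', hdw'⟩ := hyp (c 0) (c h) (c n) σ₁ σ₂ γ hσ₁ hσ₂ hγ w hw
      rcases hw' with hw' | hw'
      · obtain ⟨i, hi, hd⟩ := ih h hh1 c (fun i hi => hst i (by omega)) σ₁ hσ₁ w' hw'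
        refine ⟨i, by omega, ?_⟩
        calc dist w (c i) ≤ dist w w' + dist w' (c i) := dist_triangle _ _ _
          _ ≤ Δ + (Δ * k + s/2) := by linarith
          _ = Δ * (k+1 : ℕ) + s/2 := by push_cast; ring
      · have hc0 : (fun j => c (h + j)) 0 = c h := by simp
        have hcn : (fun j => c (h + j)) (n - h) = c n := by
          show c (h + (n - h)) = c n
          congr 1
          omega
        obtain ⟨i, hi, hd⟩ := ih (n - h) hh2 (fun j => c (h + j))
          (fun i hi => by
            show dist (c (h + i)) (c (h + (i+1))) ≤ s
            rw [show h + (i+1) = (h+i)+1 by omega]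
            exact hst (h + i) (by omega))
          σ₂ (by rw [← hc0, ← hcn] at hσ₂; exact hσ₂) w' (by rwa [← hc0, ← hcn] at hw')
        refine ⟨h + i, by omega, ?_⟩
        calc dist w (c (h+i)) ≤ dist w w' + dist w' (c (h+i)) := dist_triangle _ _ _
          _ ≤ Δ + (Δ * k + s/2) := by linarith [hd]
          _ = Δ * (k+1 : ℕ) + s/2 := by push_cast; ring

/-- Lemma P: if `q` is a nearest point of the geodesic to `p`, then going through `q`
is an almost-geodesic route to any point `x` of the geodesic. -/
lemma lemP {X : Type} [MetricSpace X] (geo : GeodesicMS X) {Δ : ℝ} (hyp : DeltaHyperbolic X Δ)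
    {γ : ℝ → X} {a b : X} (hγ : IsGeodesicSeg γ a b) {p q : X}
    (hqmem : q ∈ geodImage γ a b) (hq : ∀ x' ∈ geodImage γ a b, dist p q ≤ dist p x') :
    ∀ x ∈ geodImage γ a b, dist p q + dist q x ≤ dist p x + 6 * Δ := by
  intro x hx
  obtain ⟨u, hu, hqu⟩ := hqmem
  obtain ⟨v, hv, hxv⟩ := hx
  -- restriction geodesic from q to x
  obtain ⟨ρ, hρ, hρmem, -⟩ := geo_sub hγ hu hv
  rw [hqu, hxv] at hρ hρmem
  obtain ⟨τ, hτ⟩ := geo p q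
  obtain ⟨σ, hσ⟩ := geo p x
  have thin := hyp p q x τ ρ σ hτ hρ hσ
  set T' := dist p x with hT'
  have hT'0 : 0 ≤ T' := dist_nonneg
  set f : ℝ → ℝ := fun t => infDist (σ t) (geodImage τ p q) with hf
  set g : ℝ → ℝ := fun t => infDist (σ t) (geodImage ρ q x) with hg
  have hfc : ContinuousOn f (Icc 0 T') :=
    (continuous_infDist_pt _).comp_continuousOn (geo_contOn hσ)
  have hgc : ContinuousOn g (Icc 0 T') :=
    (continuous_infDist_pt _).comp_continuousOn (geo_contOn hσ)
  set A : Set ℝ := Icc 0 T' ∩ f ⁻¹' (Iic Δ) with hA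
  have hA0 : (0:ℝ) ∈ A := by
    constructor
    · exact ⟨le_refl _, hT'0⟩
    · show f 0 ≤ Δ
      have : f 0 = 0 := by
        rw [hf]; simp only; rw [hσ.1]
        exact infDist_zero_of_mem (geo_x_mem hτ)
      rw [this]
      -- Δ ≥ 0: from thinness of the degenerate triangle
      obtain ⟨q', hq', hdq'⟩ := hyp p q x τ ρ σ hτ hρ hσ p (geo_x_mem hσ)
      exact le_trans dist_nonneg hdq'
  have hΔ0 : 0 ≤ Δ := by
    have := hA0.2
    simp only [mem_preimage, mem_Iic] at this
    have hf0 : f 0 = 0 := by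
      rw [hf]; simp only; rw [hσ.1]
      exact infDist_zero_of_mem (geo_x_mem hτ)
    linarith [hf0 ▸ this]
  have hAcl : IsClosed A := hfc.preimage_isClosed_of_isClosed isClosed_Icc isClosed_Iic
  have hAbdd : BddAbove A := (bddAbove_Icc (a := (0:ℝ)) (b := T')).mono inter_subset_left
  set t₀ := sSup A with ht₀
  have ht₀A : t₀ ∈ A := hAcl.csSup_mem ⟨0, hA0⟩ hAbdd
  have ht₀I : t₀ ∈ Icc 0 T' := ht₀A.1
  have hft₀ : f t₀ ≤ Δ := ht₀A.2
  -- claim: g t₀ ≤ Δ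
  have hgt₀ : g t₀ ≤ Δ := by
    rcases eq_or_lt_of_le ht₀I.2 with heq | hlt
    · have : σ t₀ = x := by rw [heq]; exact hσ.2.1
      rw [hg]; simp only; rw [this]
      exact le_trans (le_of_eq (infDist_zero_of_mem (geo_y_mem hρ))) hΔ0
    · -- for t in (t₀, T'], g t ≤ Δ
      have hmid : ∀ t ∈ Ioc t₀ T', g t ≤ Δ := by
        intro t ht
        have htI : t ∈ Icc 0 T' := ⟨le_trans ht₀I.1 (le_of_lt ht.1), ht.2⟩
        have htA : t ∉ A := fun hmem => absurd (le_csSup hAbdd hmem) (not_le.mpr ht.1)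
        have hft : ¬ f t ≤ Δ := fun hle => htA ⟨htI, hle⟩
        obtain ⟨y', hy', hdy'⟩ := thin (σ t) (geo_mem hσ htI)
        rcases hy' with hy' | hy'
        · exact absurd (le_trans (infDist_le_dist_of_mem hy') hdy') hft
        · exact le_trans (infDist_le_dist_of_mem hy') hdy'
      -- take the limit from the right
      have hclos : t₀ ∈ closure (Ioc t₀ T') := by
        rw [closure_Ioc (ne_of_lt hlt)]
        exact ⟨le_refl _, le_of_lt hlt⟩
      have hnebot : (𝓝[Ioc t₀ T'] t₀).NeBot := mem_closure_iff_nhdsWithin_neBot.mp hclos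
      have hsub : Ioc t₀ T' ⊆ Icc 0 T' := fun t ht => ⟨le_trans ht₀I.1 (le_of_lt ht.1), ht.2⟩
      have hcw : ContinuousWithinAt g (Ioc t₀ T') t₀ :=
        (hgc.continuousWithinAt ht₀I).mono hsub
      exact le_of_tendsto hcw (Filter.eventually_of_mem self_mem_nhdsWithin hmid)
  -- extract nearest points
  obtain ⟨y, hy, hyd⟩ := (geo_compact hτ).exists_infDist_eq_dist (geo_nonempty hτ) (σ t₀)
  have hydist : dist (σ t₀) y ≤ Δ := by rw [← hyd]; exact hft₀
  obtain ⟨z, hz, hzd⟩ := (geo_compact hρ).exists_infDist_eq_dist (geo_nonempty hρ) (σ t₀)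
  have hzdist : dist (σ t₀) z ≤ Δ := by rw [← hzd]; exact hgt₀
  -- parameters
  obtain ⟨sy, hsy, hysy⟩ := hy
  obtain ⟨tz, htz, hztz⟩ := hz
  have hpy : dist p y = sy := by rw [← hysy]; exact geo_dist_from_start hτ hsy
  have hyq : dist y q = dist p q - sy := by rw [← hysy]; exact geo_dist_to_end hτ hsy
  have hqz : dist q z = tz := by rw [← hztz]; exact geo_dist_from_start hρ htz
  have hzx : dist z x = dist q x - tz := by rw [← hztz]; exact geo_dist_to_end hρ htz
  have hpm : dist p (σ t₀) = t₀ := geo_dist_from_start hσ ht₀I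
  have hmx : dist (σ t₀) x = T' - t₀ := geo_dist_to_end hσ ht₀I
  have hzG : z ∈ geodImage γ a b := by rw [← hztz]; exact hρmem tz htz
  have h1 : dist p q ≤ dist p z := hq z hzG
  have h2 : dist p z ≤ dist p (σ t₀) + dist (σ t₀) z := dist_triangle _ _ _
  have h4 : dist p (σ t₀) ≤ dist p y + dist y (σ t₀) := dist_triangle _ _ _
  have h5 : dist q z ≤ dist q y + dist y (σ t₀) + dist (σ t₀) z := dist_triangle4 _ _ _ _
  have h6 : dist z x ≤ dist z (σ t₀) + dist (σ t₀) x := dist_triangle _ _ _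
  have hdy' : dist y (σ t₀) ≤ Δ := by rw [dist_comm]; exact hydist
  have hdz' : dist z (σ t₀) ≤ Δ := by rw [dist_comm]; exact hzdist
  have hqy : dist q y = dist p q - sy := by rw [dist_comm]; exact hyq
  linarith

set_option maxHeartbeats 1000000

lemma arith_kle (a b x : ℝ) (ha : 0 ≤ a) (hb : 1 ≤ b) (hx : 0 ≤ x) (h : x^2 ≤ a + b*x) :
    x ≤ a + b := by
  nlinarith [sq_nonneg (x - b), mul_nonneg (by linarith : (0:ℝ) ≤ b - 1) ha]

/-- Lemma D₀: every point of a geodesic is within a uniform constant of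
a quasigeodesic chain with the same endpoints. -/
lemma lemD0 (Δ Λ m s : ℝ) (hΔ : 1 ≤ Δ) (hΛ : 1 ≤ Λ) (hm : 0 ≤ m) (hs : 1 ≤ s) :
    ∃ D₀ : ℝ, 0 < D₀ ∧ ∀ (X : Type) [MetricSpace X], GeodesicMS X → DeltaHyperbolic X Δ →
      ∀ (n : ℕ) (c : ℕ → X), (∀ i < n, dist (c i) (c (i+1)) ≤ s) →
      (∀ i j : ℕ, i ≤ j → j ≤ n → (1/Λ) * ((j:ℝ) - i) - m ≤ dist (c i) (c j)) →
      ∀ γ : ℝ → X, IsGeodesicSeg γ (c 0) (c n) →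
      ∀ w ∈ geodImage γ (c 0) (c n), ∃ i ≤ n, dist w (c i) ≤ D₀ := by
  have hΔ0 : (0:ℝ) ≤ Δ := by linarith
  have hΛ0 : (0:ℝ) ≤ Λ := by linarith
  have hs0 : (0:ℝ) ≤ s := by linarith
  have p1 : (0:ℝ) ≤ Λ*m := mul_nonneg hΛ0 hm
  have p2 : (0:ℝ) ≤ Λ*Δ := mul_nonneg hΛ0 hΔ0
  have p3 : (0:ℝ) ≤ Λ*s := mul_nonneg hΛ0 hs0
  have pΛΔ : (1:ℝ) ≤ Λ*Δ := by nlinarith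
  have hC1nn : (0:ℝ) ≤ 8*Λ*m + 8 + 96*Λ*Δ + 24*Λ*s := by linarith
  have hC2ge : (48:ℝ) ≤ 48*Λ*Δ := by nlinarith
  have hCbig : (0:ℝ) ≤ Δ*(8*Λ*m + 8 + 96*Λ*Δ + 24*Λ*s + 48*Λ*Δ) :=
    mul_nonneg hΔ0 (by linarith)
  have hC56 : 56*Δ ≤ Δ*(8*Λ*m + 8 + 96*Λ*Δ + 24*Λ*s + 48*Λ*Δ) := by nlinarith
  refine ⟨2*Δ + s/2 + Δ*(8*Λ*m + 8 + 96*Λ*Δ + 24*Λ*s + 48*Λ*Δ) + 1, by linarith, ?_⟩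
  intro X _ geo hyp n c hstep hlow γ hγ w hw
  set S : Set X := c '' {i | i ≤ n} with hS
  have hSfin : S.Finite := (Set.finite_Iic n).image c
  have hScomp : IsCompact S := hSfin.isCompact
  have hSne : S.Nonempty := ⟨c 0, ⟨0, by simp, rfl⟩⟩
  set T := dist (c 0) (c n) with hT
  have hT0 : (0:ℝ) ≤ T := dist_nonneg
  set F : ℝ → ℝ := fun t => infDist (γ t) S with hF
  have hFc : ContinuousOn F (Icc 0 T) :=
    (continuous_infDist_pt _).comp_continuousOn (geo_contOn hγ)
  obtain ⟨u₀, hu₀I, hu₀max⟩ := isCompact_Icc.exists_isMaxOn (nonempty_Icc.mpr hT0) hFc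
  set D : ℝ := F u₀ with hD
  have hD0 : 0 ≤ D := infDist_nonneg
  -- the key claim
  have key : D ≤ 2*Δ + s/2 + Δ*(8*Λ*m + 8 + 96*Λ*Δ + 24*Λ*s + 48*Λ*Δ) + 1 := by
    set w₀ : X := γ u₀ with hw₀
    set uy : ℝ := max (u₀ - 2*D) 0 with huy
    set uz : ℝ := min (u₀ + 2*D) T with huz
    have huyI : uy ∈ Icc 0 T := by
      rw [huy]
      exact ⟨le_max_right _ _, max_le (by linarith [hu₀I.2]) hT0⟩
    have huzI : uz ∈ Icc 0 T := by
      rw [huz]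
      exact ⟨le_min (by linarith [hu₀I.1]) hT0, min_le_right _ _⟩
    have huyu₀ : uy ≤ u₀ := by rw [huy]; exact max_le (by linarith) hu₀I.1
    have hu₀uz : u₀ ≤ uz := by rw [huz]; exact le_min (by linarith) hu₀I.2
    set y : X := γ uy with hy
    set z : X := γ uz with hz
    have hwy : dist w₀ y = u₀ - uy := by
      rw [hw₀, hy, hγ.2.2 u₀ hu₀I uy huyI, abs_of_nonneg (by linarith)]
    have hwz : dist w₀ z = uz - u₀ := by
      rw [hw₀, hz, hγ.2.2 u₀ hu₀I uz huzI, abs_of_nonpos (by linarith)]; ring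
    have hwy2 : dist w₀ y ≤ 2*D := by
      rw [hwy]; have := le_max_left (u₀ - 2*D) 0; rw [← huy] at this; linarith
    have hwz2 : dist w₀ z ≤ 2*D := by
      rw [hwz]; have := min_le_left (u₀ + 2*D) T; rw [← huz] at this; linarith
    -- y-side package
    have hyside : ∃ ty : ℕ, ty ≤ n ∧ dist y (c ty) ≤ D ∧ D ≤ dist w₀ y := by
      rcases le_or_gt u₀ (2*D) with hcase | hcase
      · have huy0 : uy = 0 := by rw [huy]; exact max_eq_right (by linarith)
        have hyc0 : y = c 0 := by rw [hy, huy0, hγ.1]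
        refine ⟨0, Nat.zero_le _, ?_, ?_⟩
        · rw [hyc0]; simpa using hD0
        · rw [hyc0]; exact infDist_le_dist_of_mem ⟨0, by simp, rfl⟩
      · have huy' : uy = u₀ - 2*D := by rw [huy]; exact max_eq_left (by linarith)
        obtain ⟨pt, hptS, hpteq⟩ := hScomp.exists_infDist_eq_dist hSne y
        obtain ⟨ty, hty, rfl⟩ := hptS
        refine ⟨ty, hty, ?_, ?_⟩
        · rw [← hpteq]; exact isMaxOn_iff.mp hu₀max uy huyI
        · rw [hwy, huy']; linarith
    -- z-side package
    have hzside : ∃ tz : ℕ, tz ≤ n ∧ dist z (c tz) ≤ D ∧ D ≤ dist w₀ z := by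
      rcases le_or_gt (T - u₀) (2*D) with hcase | hcase
      · have huz0 : uz = T := by rw [huz]; exact min_eq_right (by linarith)
        have hzcn : z = c n := by rw [hz, huz0, hT, hγ.2.1]
        refine ⟨n, le_refl _, ?_, ?_⟩
        · rw [hzcn]; simpa using hD0
        · rw [hzcn]; exact infDist_le_dist_of_mem ⟨n, by simp, rfl⟩
      · have huz' : uz = u₀ + 2*D := by rw [huz]; exact min_eq_left (by linarith)
        obtain ⟨pt, hptS, hpteq⟩ := hScomp.exists_infDist_eq_dist hSne z
        obtain ⟨tz, htz, rfl⟩ := hptS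
        refine ⟨tz, htz, ?_, ?_⟩
        · rw [← hpteq]; exact isMaxOn_iff.mp hu₀max uz huzI
        · rw [hwz, huz']; linarith
    obtain ⟨ty, htyn, htyd, htyD⟩ := hyside
    obtain ⟨tz, htzn, htzd, htzD⟩ := hzside
    -- restriction of γ from uy to uz : geodesic from y to z through w₀
    obtain ⟨γ', hγ', -, hγ'sur⟩ := geo_sub hγ huyI huzI
    have hw₀mem : w₀ ∈ geodImage γ' y z := by
      have h1 : min uy uz = uy := min_eq_left (le_trans huyu₀ hu₀uz)
      have h2 : max uy uz = uz := max_eq_right (le_trans huyu₀ hu₀uz)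
      exact hγ'sur u₀ (by rw [h1, h2]; exact ⟨huyu₀, hu₀uz⟩)
    -- triangle 1 : (y, c ty, z)
    obtain ⟨σ₁, hσ₁⟩ := geo y (c ty)
    obtain ⟨σ₂, hσ₂⟩ := geo (c ty) z
    obtain ⟨w', hw', hdw'⟩ := hyp y (c ty) z σ₁ σ₂ γ' hσ₁ hσ₂ hγ' w₀ hw₀mem
    have hDW : ∀ (j : ℕ), j ≤ n → D ≤ dist w₀ (c j) := by
      intro j hj
      exact infDist_le_dist_of_mem ⟨j, hj, rfl⟩
    rcases hw' with hw' | hw'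
    · -- case A : near the side [y, c ty] : D ≤ 2Δ
      obtain ⟨av, hav, rfl⟩ := hw'
      have h1 : dist (σ₁ av) (c ty) = dist y (c ty) - av := geo_dist_to_end hσ₁ hav
      have h2 : dist y (σ₁ av) = av := geo_dist_from_start hσ₁ hav
      have h3 : D ≤ dist w₀ (c ty) := hDW ty htyn
      have h4 : dist w₀ (c ty) ≤ dist w₀ (σ₁ av) + dist (σ₁ av) (c ty) := dist_triangle _ _ _
      have h5 : dist w₀ y ≤ dist w₀ (σ₁ av) + dist (σ₁ av) y := dist_triangle _ _ _
      have h6 : dist (σ₁ av) y = av := by rw [dist_comm]; exact h2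
      have hDΔ : D ≤ 2*Δ := by linarith
      linarith
    · -- case B : near the side [c ty, z]
      -- triangle 2 : (c ty, c tz, z)
      obtain ⟨τ, hτ⟩ := geo (c ty) (c tz)
      obtain ⟨σ₃, hσ₃⟩ := geo (c tz) z
      obtain ⟨w₂, hw₂, hdw₂⟩ := hyp (c ty) (c tz) z τ σ₃ σ₂ hτ hσ₃ hσ₂ w' hw'
      rcases hw₂ with hw₂ | hw₂
      swap
      · -- case B1 : near [c tz, z] : D ≤ 4Δ
        obtain ⟨av, hav, rfl⟩ := hw₂
        have h1 : dist (σ₃ av) z = dist (c tz) z - av := geo_dist_to_end hσ₃ hav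
        have h2 : dist (c tz) (σ₃ av) = av := geo_dist_from_start hσ₃ hav
        have h3 : D ≤ dist w₀ (c tz) := hDW tz htzn
        have h4 : dist w₀ (c tz) ≤ dist w₀ w' + dist w' (σ₃ av) + dist (σ₃ av) (c tz) :=
          dist_triangle4 _ _ _ _
        have h5 : dist w₀ z ≤ dist w₀ w' + dist w' (σ₃ av) + dist (σ₃ av) z :=
          dist_triangle4 _ _ _ _
        have h6 : dist (σ₃ av) (c tz) = av := by rw [dist_comm]; exact h2
        have h7 : dist (c tz) z ≤ D := by rw [dist_comm]; exact htzd
        have hDΔ : D ≤ 4*Δ := by linarith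
        linarith
      · -- case B2 : near the chain geodesic [c ty, c tz] : main case
        have hcc : dist (c ty) (c tz) ≤ 6*D := by
          have h1 : dist (c ty) (c tz) ≤ dist (c ty) y + dist y z + dist z (c tz) :=
            dist_triangle4 _ _ _ _
          have h2 : dist y z ≤ dist y w₀ + dist w₀ z := dist_triangle _ _ _
          have h3 : dist (c ty) y = dist y (c ty) := dist_comm _ _
          have h4 : dist y w₀ = dist w₀ y := dist_comm _ _
          linarith
        set i₁ := min ty tz with hi₁
        set i₂ := max ty tz with hi₂
        have hil : i₁ ≤ i₂ := min_le_max
        have hi₂n : i₂ ≤ n := max_le htyn htzn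
        have hΛpos : (0:ℝ) < Λ := by linarith
        have hd12 : dist (c i₁) (c i₂) = dist (c ty) (c tz) := by
          rcases le_total ty tz with h | h
          · rw [hi₁, hi₂, min_eq_left h, max_eq_right h]
          · rw [hi₁, hi₂, min_eq_right h, max_eq_left h, dist_comm]
        have hgap : ((i₂ - i₁ : ℕ) : ℝ) ≤ Λ * (m + 6*D) := by
          have hlow' := hlow i₁ i₂ hil hi₂n
          rw [hd12] at hlow'
          have hX : (1/Λ) * ((i₂:ℝ) - i₁) ≤ m + 6*D := by linarith
          have hcast : ((i₂ - i₁ : ℕ) : ℝ) = (i₂ : ℝ) - (i₁ : ℝ) := by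
            push_cast [Nat.cast_sub hil]; ring
          rw [hcast]
          calc ((i₂:ℝ) - i₁) = Λ * ((1/Λ) * ((i₂:ℝ) - i₁)) := by field_simp
            _ ≤ Λ * (m + 6*D) := mul_le_mul_of_nonneg_left hX hΛ0
        -- lemB on the subchain
        obtain ⟨k, hk1, hk2⟩ := exists_pow_between (i₂ - i₁)
        set c' : ℕ → X := fun j => c (i₁ + j) with hc'
        have hc'0 : c' 0 = c i₁ := by simp [hc']
        have hc'n : c' (i₂ - i₁) = c i₂ := by
          show c (i₁ + (i₂ - i₁)) = c i₂
          congr 1; omega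
        have hstep' : ∀ i < i₂ - i₁, dist (c' i) (c' (i+1)) ≤ s := by
          intro i hi
          show dist (c (i₁ + i)) (c (i₁ + (i+1))) ≤ s
          rw [show i₁ + (i+1) = (i₁ + i) + 1 by omega]
          exact hstep (i₁ + i) (by omega)
        have hB : ∃ i ≤ i₂ - i₁, dist w₂ (c' i) ≤ Δ * k + s/2 := by
          rcases le_total ty tz with hor | hor
          · have e1 : i₁ = ty := min_eq_left hor
            have e2 : i₂ = tz := max_eq_right hor
            have hτ' : IsGeodesicSeg τ (c' 0) (c' (i₂ - i₁)) := by
              rw [hc'0, hc'n, e1, e2]; exact hτ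
            apply lemB geo hyp hs0 k (i₂ - i₁) hk1 c' hstep' τ hτ' w₂
            rw [hc'0, hc'n, e1, e2]; exact hw₂
          · have e1 : i₁ = tz := min_eq_right hor
            have e2 : i₂ = ty := max_eq_left hor
            obtain ⟨hτr, hτrim⟩ := geo_rev hτ
            have hτ' : IsGeodesicSeg (fun t => τ (dist (c ty) (c tz) - t)) (c' 0) (c' (i₂ - i₁)) := by
              rw [hc'0, hc'n, e1, e2]; exact hτr
            apply lemB geo hyp hs0 k (i₂ - i₁) hk1 c' hstep' _ hτ' w₂
            rw [hc'0, hc'n, e1, e2, hτrim]; exact hw₂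
        obtain ⟨j, hjle, hjd⟩ := hB
        have hDj : D ≤ dist w₀ (c (i₁ + j)) := hDW (i₁ + j) (by omega)
        have hchain : dist w₀ (c (i₁ + j)) ≤ dist w₀ w' + dist w' w₂ + dist w₂ (c' j) :=
          dist_triangle4 _ _ _ _
        have hDk : D ≤ 2*Δ + Δ*k + s/2 := by
          have hj' : dist w₂ (c' j) ≤ Δ * k + s/2 := hjd
          linarith
        -- arithmetic
        have hk2' : ((2:ℝ))^k ≤ 2*((i₂ - i₁ : ℕ):ℝ) + 2 := by exact_mod_cast hk2
        have hksq : ((k:ℝ))^2 + 2 ≤ 4*(2:ℝ)^k := nat_sq_le' k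
        have hknn : (0:ℝ) ≤ (k:ℝ) := Nat.cast_nonneg k
        have hx2 : ((k:ℝ))^2 ≤ 8*(Λ*(m + 6*D)) + 8 := by linarith
        have hx2' : ((k:ℝ))^2 ≤ (8*Λ*m + 8 + 96*Λ*Δ + 24*Λ*s) + (48*Λ*Δ)*(k:ℝ) := by
          nlinarith [mul_le_mul_of_nonneg_left hDk (by linarith : (0:ℝ) ≤ 48*Λ)]
        have hkle : (k:ℝ) ≤ 8*Λ*m + 8 + 96*Λ*Δ + 24*Λ*s + 48*Λ*Δ :=
          arith_kle _ _ _ hC1nn (by linarith) hknn hx2'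
        have hfin : Δ*(k:ℝ) ≤ Δ*(8*Λ*m + 8 + 96*Λ*Δ + 24*Λ*s + 48*Λ*Δ) :=
          mul_le_mul_of_nonneg_left hkle hΔ0
        linarith
  -- conclude for arbitrary w on the geodesic
  obtain ⟨t, htI, rfl⟩ := hw
  have hFt : F t ≤ D := isMaxOn_iff.mp hu₀max t htI
  obtain ⟨pt, hptS, hpteq⟩ := hScomp.exists_infDist_eq_dist hSne (γ t)
  obtain ⟨i, hin, rfl⟩ := hptS
  exact ⟨i, hin, by rw [← hpteq]; linarith⟩

/-- Morse lemma: every point of a quasigeodesic chain is uniformly close to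
any geodesic joining its endpoints. -/
lemma lemMorse (Δ Λ m s : ℝ) (hΔ : 1 ≤ Δ) (hΛ : 1 ≤ Λ) (hm : 0 ≤ m) (hs : 1 ≤ s) :
    ∃ M : ℝ, 0 < M ∧ ∀ (X : Type) [MetricSpace X], GeodesicMS X → DeltaHyperbolic X Δ →
      ∀ (n : ℕ) (c : ℕ → X), (∀ i < n, dist (c i) (c (i+1)) ≤ s) →
      (∀ i j : ℕ, i ≤ j → j ≤ n → (1/Λ) * ((j:ℝ) - i) - m ≤ dist (c i) (c j)) →
      ∀ γ : ℝ → X, IsGeodesicSeg γ (c 0) (c n) →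
      ∀ i ≤ n, ∃ w ∈ geodImage γ (c 0) (c n), dist (c i) w ≤ M := by
  classical
  obtain ⟨D₀, hD₀pos, hD₀⟩ := lemD0 Δ Λ m s hΔ hΛ hm hs
  have hΛ0 : (0:ℝ) ≤ Λ := by linarith
  have hs0 : (0:ℝ) ≤ s := by linarith
  have q1 : (0:ℝ) ≤ m + 2*D₀ := by linarith
  have q2 : (0:ℝ) ≤ Λ*(m + 2*D₀) := mul_nonneg hΛ0 q1
  have q3 : (0:ℝ) ≤ s*(Λ*(m + 2*D₀) + 1) := mul_nonneg hs0 (by linarith)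
  refine ⟨s*(Λ*(m + 2*D₀) + 1) + D₀, by linarith, ?_⟩
  intro X _ geo hyp n c hstep hlow γ hγ i₀ hi₀n
  set G := geodImage γ (c 0) (c n) with hG
  set P : ℕ → Prop := fun i => ∃ w ∈ G, dist (c i) w ≤ D₀ with hP
  have hP0 : P 0 := ⟨c 0, geo_x_mem hγ, by simp; linarith⟩
  have hPn : P n := ⟨c n, geo_y_mem hγ, by simp; linarith⟩
  by_cases hPi : P i₀
  · obtain ⟨w, hwG, hwd⟩ := hPi
    exact ⟨w, hwG, by linarith⟩
  · set i₁ := Nat.findGreatest P i₀ with hi₁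
    have hi₁le : i₁ ≤ i₀ := Nat.findGreatest_le i₀
    have hPi₁ : P i₁ := Nat.findGreatest_spec (Nat.zero_le i₀) hP0
    have hEx : ∃ j, P (i₀ + j) := ⟨n - i₀, by rwa [show i₀ + (n - i₀) = n by omega]⟩
    set j₀ := Nat.find hEx with hj₀
    set i₂ := i₀ + j₀ with hi₂
    have hPi₂ : P i₂ := Nat.find_spec hEx
    have hi₂n : i₂ ≤ n := by
      have : j₀ ≤ n - i₀ := Nat.find_min' hEx (by rwa [show i₀ + (n - i₀) = n by omega])
      omega
    have hmid : ∀ i, i₁ < i → i < i₂ → ¬ P i := by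
      intro i h1 h2
      rcases le_or_gt i i₀ with h | h
      · exact Nat.findGreatest_is_greatest h1 h
      · intro hPi'
        have hPi'' : P (i₀ + (i - i₀)) := by rwa [show i₀ + (i - i₀) = i by omega]
        exact Nat.find_min hEx (by omega : i - i₀ < j₀) hPi''
    have hi₁lt : i₁ < i₀ := lt_of_le_of_ne hi₁le (fun h => hPi (h ▸ hPi₁))
    have hi₀lt : i₀ < i₂ := by
      rcases Nat.eq_zero_or_pos j₀ with h | h
      · exfalso
        apply hPi
        have := Nat.find_spec hEx
        rwa [← hj₀, h, Nat.add_zero] at this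
      · omega
    -- IVT setup
    set T := dist (c 0) (c n) with hT
    have hT0 : (0:ℝ) ≤ T := dist_nonneg
    set S₁ : Set X := c '' {i | i ≤ i₁} with hS₁
    set S₂ : Set X := c '' {i | i₂ ≤ i ∧ i ≤ n} with hS₂
    have hS₁c : IsCompact S₁ := ((Set.finite_Iic i₁).image c).isCompact
    have hS₂c : IsCompact S₂ := ((Set.finite_Icc i₂ n).subset (by
      intro x hx; exact hx)).isCompact.image_of_continuousOn (by
        exact continuousOn_of_forall_continuousAt (fun x _ => continuous_of_discreteTopology.continuousAt))
    have hS₁ne : S₁.Nonempty := ⟨c 0, 0, Nat.zero_le _, rfl⟩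
    have hS₂ne : S₂.Nonempty := ⟨c n, n, ⟨hi₂n, le_refl _⟩, rfl⟩
    set g : ℝ → ℝ := fun u => infDist (γ u) S₁ - infDist (γ u) S₂ with hg
    have hgc : ContinuousOn g (Icc 0 T) :=
      (((continuous_infDist_pt S₁).sub (continuous_infDist_pt S₂)).comp_continuousOn
        (geo_contOn hγ))
    have hg0 : g 0 ≤ 0 := by
      have h1 : infDist (γ 0) S₁ = 0 := by
        rw [hγ.1]; exact infDist_zero_of_mem ⟨0, Nat.zero_le _, rfl⟩
      have h2 : (0:ℝ) ≤ infDist (γ 0) S₂ := infDist_nonneg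
      show infDist (γ 0) S₁ - infDist (γ 0) S₂ ≤ 0
      linarith
    have hgT : 0 ≤ g T := by
      have h1 : infDist (γ T) S₂ = 0 := by
        rw [hT, hγ.2.1]; exact infDist_zero_of_mem ⟨n, ⟨hi₂n, le_refl _⟩, rfl⟩
      have h2 : (0:ℝ) ≤ infDist (γ T) S₁ := infDist_nonneg
      show infDist (γ T) S₁ - infDist (γ T) S₂ ≥ 0
      linarith
    have h0mem : (0:ℝ) ∈ Icc (g 0) (g T) := ⟨hg0, hgT⟩
    obtain ⟨u₁, hu₁I, hgu₁⟩ := intermediate_value_Icc hT0 hgc h0mem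
    set w₁ : X := γ u₁ with hw₁
    have hw₁G : w₁ ∈ G := ⟨u₁, hu₁I, rfl⟩
    obtain ⟨j, hjn, hjd⟩ := hD₀ X geo hyp n c hstep hlow γ hγ w₁ hw₁G
    -- both infDists at w₁ are ≤ D₀
    have hboth : infDist w₁ S₁ ≤ D₀ ∧ infDist w₁ S₂ ≤ D₀ := by
      have hjcase : j ≤ i₁ ∨ i₂ ≤ j := by
        by_contra hcon
        push_neg at hcon
        exact hmid j hcon.1 hcon.2 ⟨w₁, hw₁G, by rw [dist_comm]; exact hjd⟩
      have heq : infDist w₁ S₁ - infDist w₁ S₂ = 0 := hgu₁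
      rcases hjcase with h | h
      · have h1 : infDist w₁ S₁ ≤ D₀ :=
          le_trans (infDist_le_dist_of_mem ⟨j, h, rfl⟩) hjd
        exact ⟨h1, by linarith⟩
      · have h1 : infDist w₁ S₂ ≤ D₀ :=
          le_trans (infDist_le_dist_of_mem ⟨j, ⟨h, hjn⟩, rfl⟩) hjd
        exact ⟨by linarith, h1⟩
    obtain ⟨p₁, hp₁S, hp₁eq⟩ := hS₁c.exists_infDist_eq_dist hS₁ne w₁
    obtain ⟨p₂, hp₂S, hp₂eq⟩ := hS₂c.exists_infDist_eq_dist hS₂ne w₁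
    obtain ⟨j₁, hj₁le, rfl⟩ := hp₁S
    obtain ⟨j₂, hj₂mem, rfl⟩ := hp₂S
    have hd₁ : dist w₁ (c j₁) ≤ D₀ := by rw [← hp₁eq]; exact hboth.1
    have hd₂ : dist w₁ (c j₂) ≤ D₀ := by rw [← hp₂eq]; exact hboth.2
    have hj₁j₂ : j₁ ≤ j₂ := by
      have : j₁ ≤ i₁ := hj₁le
      have : i₂ ≤ j₂ := hj₂mem.1
      omega
    have hdj : dist (c j₁) (c j₂) ≤ 2*D₀ := by
      have := dist_triangle (c j₁) w₁ (c j₂)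
      have hc : dist (c j₁) w₁ = dist w₁ (c j₁) := dist_comm _ _
      linarith
    have hgap : ((j₂ - j₁ : ℕ) : ℝ) ≤ Λ * (m + 2*D₀) := by
      have hlow' := hlow j₁ j₂ hj₁j₂ hj₂mem.2
      have hX : (1/Λ) * ((j₂:ℝ) - j₁) ≤ m + 2*D₀ := by linarith
      have hcast : ((j₂ - j₁ : ℕ) : ℝ) = (j₂ : ℝ) - (j₁ : ℝ) := by
        push_cast [Nat.cast_sub hj₁j₂]; ring
      rw [hcast]
      have hΛpos : (0:ℝ) < Λ := by linarith
      calc ((j₂:ℝ) - j₁) = Λ * ((1/Λ) * ((j₂:ℝ) - j₁)) := by field_simp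
        _ ≤ Λ * (m + 2*D₀) := mul_le_mul_of_nonneg_left hX hΛ0
    -- conclude
    obtain ⟨w₂, hw₂G, hw₂d⟩ := hPi₁
    have hcu : dist (c i₁) (c i₀) ≤ s * ((i₀ - i₁ : ℕ) : ℝ) :=
      chain_upper hstep i₁ i₀ (le_of_lt hi₁lt) hi₀n
    have hmono : ((i₀ - i₁ : ℕ) : ℝ) ≤ ((j₂ - j₁ : ℕ) : ℝ) := by
      have h1 : j₁ ≤ i₁ := hj₁le
      have h2 : i₂ ≤ j₂ := hj₂mem.1
      have : (i₀ - i₁ : ℕ) ≤ (j₂ - j₁ : ℕ) := by omega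
      exact_mod_cast this
    have hfin : s * ((i₀ - i₁ : ℕ) : ℝ) ≤ s * (Λ*(m + 2*D₀)) :=
      mul_le_mul_of_nonneg_left (le_trans hmono hgap) hs0
    refine ⟨w₂, hw₂G, ?_⟩
    have htri : dist (c i₀) w₂ ≤ dist (c i₀) (c i₁) + dist (c i₁) w₂ := dist_triangle _ _ _
    have hcomm : dist (c i₀) (c i₁) = dist (c i₁) (c i₀) := dist_comm _ _
    nlinarith

/-- Packaged Morse lemma: the φ-image of a point on an almost-geodesic path is
uniformly close to any geodesic joining the φ-images of the endpoints. -/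
lemma morse_pt (Δ Λ E κ : ℝ) (hΔ : 1 ≤ Δ) (hΛ : 1 ≤ Λ) (hE : 0 ≤ E) (hκ : 0 ≤ κ) :
    ∃ M : ℝ, 0 < M ∧ ∀ (X Y : Type) [MetricSpace X] [MetricSpace Y],
      GeodesicMS Y → DeltaHyperbolic Y Δ →
      ∀ (h : ℝ → X) (L ℓs : ℝ), 0 ≤ L → ℓs ∈ Icc 0 L →
      (∀ ℓ₁ ∈ Icc (0:ℝ) L, ∀ ℓ₂ ∈ Icc (0:ℝ) L,
        |ℓ₁ - ℓ₂| - κ ≤ dist (h ℓ₁) (h ℓ₂) ∧ dist (h ℓ₁) (h ℓ₂) ≤ |ℓ₁ - ℓ₂|) →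
      ∀ φ : X → Y, (∀ u v : X, (1/Λ) * dist u v - E ≤ dist (φ u) (φ v) ∧
        dist (φ u) (φ v) ≤ Λ * dist u v + E) →
      ∀ γ : ℝ → Y, IsGeodesicSeg γ (φ (h 0)) (φ (h L)) →
      ∃ w ∈ geodImage γ (φ (h 0)) (φ (h L)), dist (φ (h ℓs)) w ≤ M := by
  have hm' : (0:ℝ) ≤ E + 2 + κ := by linarith
  have hs' : (1:ℝ) ≤ Λ + E := by linarith
  obtain ⟨M, hMpos, hM⟩ := lemMorse Δ Λ (E + 2 + κ) (Λ + E) hΔ hΛ hm' hs'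
  refine ⟨M, hMpos, ?_⟩
  intro X Y _ _ geo hyp h L ℓs hL hℓs hpath φ hφ γ hγ
  have hΛ0 : (0:ℝ) ≤ Λ := by linarith
  have hΛpos : (0:ℝ) < Λ := by linarith
  have hℓ0 : 0 ≤ ℓs := hℓs.1
  have hℓL : ℓs ≤ L := hℓs.2
  set n₁ : ℕ := ⌈ℓs⌉₊ with hn₁
  set n₂ : ℕ := ⌈L - ℓs⌉₊ with hn₂
  set n : ℕ := n₁ + n₂ with hn
  have hceil1 : ℓs ≤ (n₁:ℝ) := Nat.le_ceil ℓs
  have hceil1' : (n₁:ℝ) ≤ ℓs + 1 := le_of_lt (Nat.ceil_lt_add_one hℓ0)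
  have hceil2 : L - ℓs ≤ (n₂:ℝ) := Nat.le_ceil _
  have hceil2' : (n₂:ℝ) ≤ L - ℓs + 1 := le_of_lt (Nat.ceil_lt_add_one (by linarith))
  set t : ℕ → ℝ := fun i => if i ≤ n₁ then min (i:ℝ) ℓs else min (ℓs + ((i - n₁ : ℕ):ℝ)) L
    with ht
  have htmem : ∀ i, t i ∈ Icc 0 L := by
    intro i
    simp only [ht]
    by_cases hc : i ≤ n₁
    · rw [if_pos hc]
      exact ⟨le_min (Nat.cast_nonneg i) hℓ0, le_trans (min_le_right _ _) hℓL⟩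
    · rw [if_neg hc]
      refine ⟨le_min (by positivity) (by linarith), min_le_right _ _⟩
  have ht0 : t 0 = 0 := by
    simp only [ht]
    rw [if_pos (Nat.zero_le n₁), Nat.cast_zero]
    exact min_eq_left hℓ0
  have htn1 : t n₁ = ℓs := by
    simp only [ht]
    rw [if_pos (le_refl n₁)]
    exact min_eq_right hceil1
  have htn : t n = L := by
    rcases Nat.eq_zero_or_pos n₂ with h2 | h2
    · have hLs : L = ℓs := by
        have : (n₂:ℝ) = 0 := by exact_mod_cast congrArg Nat.cast h2
        linarith
      have : n = n₁ := by omega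
      rw [this, htn1, hLs]
    · have hgt : ¬ n ≤ n₁ := by omega
      simp only [ht]; rw [if_neg hgt]
      have : ((n - n₁ : ℕ):ℝ) = (n₂:ℝ) := by
        congr 1
        omega
      rw [this]
      exact min_eq_right (by linarith)
  have thigh : ∀ i : ℕ, t i ≤ (i:ℝ) := by
    intro i
    simp only [ht]
    by_cases hc : i ≤ n₁
    · rw [if_pos hc]; exact min_le_left _ _
    · rw [if_neg hc]
      push_neg at hc
      have hcast : ((i - n₁ : ℕ):ℝ) = (i:ℝ) - n₁ := by
        push_cast [Nat.cast_sub (le_of_lt hc)]; ring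
      calc min (ℓs + ((i - n₁ : ℕ):ℝ)) L ≤ ℓs + ((i - n₁ : ℕ):ℝ) := min_le_left _ _
        _ ≤ (n₁:ℝ) + ((i:ℝ) - n₁) := by rw [hcast]; linarith
        _ = (i:ℝ) := by ring
  have tlow : ∀ i : ℕ, i ≤ n → (i:ℝ) - 2 ≤ t i := by
    intro i hin
    simp only [ht]
    by_cases hc : i ≤ n₁
    · rw [if_pos hc]
      rcases le_total (i:ℝ) ℓs with h | h
      · rw [min_eq_left h]; linarith
      · rw [min_eq_right h]
        have : (i:ℝ) ≤ n₁ := by exact_mod_cast hc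
        linarith
    · rw [if_neg hc]
      push_neg at hc
      have hcast : ((i - n₁ : ℕ):ℝ) = (i:ℝ) - n₁ := by
        push_cast [Nat.cast_sub (le_of_lt hc)]; ring
      have hiL : (i:ℝ) ≤ L + 2 := by
        have : (i:ℝ) ≤ (n:ℝ) := by exact_mod_cast hin
        have hnL : (n:ℝ) ≤ L + 2 := by
          rw [hn]; push_cast; linarith
        linarith
      refine le_min ?_ (by linarith)
      rw [hcast]
      linarith
  have tstep : ∀ i : ℕ, t i ≤ t (i+1) ∧ t (i+1) ≤ t i + 1 := by
    intro i
    rcases lt_trichotomy (i+1 : ℕ) n₁ with hc | hc | hc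
    · -- both in first branch
      have h1 : i ≤ n₁ := by omega
      have h2 : i + 1 ≤ n₁ := by omega
      simp only [ht]
      rw [if_pos h1, if_pos h2]
      constructor
      · exact min_le_min (by push_cast; linarith) (le_refl _)
      · rcases le_total ℓs (i:ℝ) with h | h
        · rw [min_eq_right h, min_eq_right (by push_cast; linarith)]; linarith
        · rw [min_eq_left h]
          push_cast
          exact le_trans (min_le_left _ _) (by linarith)
    · -- i+1 = n₁, still both first branch
      have h1 : i ≤ n₁ := by omega
      have h2 : i + 1 ≤ n₁ := by omega
      simp only [ht]; rw [if_pos h1, if_pos h2]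
      constructor
      · exact min_le_min (by push_cast; linarith) (le_refl _)
      · rcases le_total ℓs (i:ℝ) with h | h
        · rw [min_eq_right h, min_eq_right (by push_cast; linarith)]; linarith
        · rw [min_eq_left h]
          push_cast
          exact le_trans (min_le_left _ _) (by linarith)
    · -- i+1 > n₁
      have h2 : ¬ (i + 1 ≤ n₁) := by omega
      rcases Nat.lt_or_ge n₁ i with hi | hi
      · -- both in second branch
        have h1 : ¬ (i ≤ n₁) := by omega
        simp only [ht]; rw [if_neg h1, if_neg h2]
        have hcasti : ((i - n₁ : ℕ):ℝ) = (i:ℝ) - n₁ := by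
          push_cast [Nat.cast_sub (le_of_lt hi)]; ring
        have hcasti1 : ((i + 1 - n₁ : ℕ):ℝ) = (i:ℝ) + 1 - n₁ := by
          push_cast [Nat.cast_sub (by omega : n₁ ≤ i + 1)]; ring
        rw [hcasti, hcasti1]
        constructor
        · exact min_le_min (by linarith) (le_refl _)
        · rcases le_total L (ℓs + ((i:ℝ) - n₁)) with h | h
          · rw [min_eq_right h, min_eq_right (by linarith)]; linarith
          · rw [min_eq_left h]
            exact le_trans (min_le_left _ _) (by linarith)
      · -- i = n₁ (junction)
        have hieq : i = n₁ := by omega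
        have h1 : i ≤ n₁ := by omega
        simp only [ht]; rw [if_pos h1, if_neg h2]
        have hin : (n₁:ℝ) = (i:ℝ) := by exact_mod_cast hieq.symm
        have hmin : min (i:ℝ) ℓs = ℓs := min_eq_right (by rw [← hin]; exact hceil1)
        have hcast : ((i + 1 - n₁ : ℕ):ℝ) = 1 := by
          rw [show i + 1 - n₁ = 1 by omega]; norm_num
        rw [hmin, hcast]
        constructor
        · exact le_min (by linarith) hℓL
        · exact le_trans (min_le_left _ _) (by linarith)
  have tmono : ∀ i j : ℕ, i ≤ j → t i ≤ t j := by
    intro i j hij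
    induction j with
    | zero => simp_all
    | succ a ih =>
      rcases Nat.eq_or_lt_of_le hij with h | h
      · rw [h]
      · exact le_trans (ih (by omega)) (tstep a).1
  -- the chain
  set c : ℕ → Y := fun i => φ (h (t i)) with hc
  have hchstep : ∀ i < n, dist (c i) (c (i+1)) ≤ Λ + E := by
    intro i _
    have hup := (hφ (h (t i)) (h (t (i+1)))).2
    have hd := (hpath (t i) (htmem i) (t (i+1)) (htmem (i+1))).2
    have habs : |t i - t (i+1)| ≤ 1 := by
      rw [abs_of_nonpos (by linarith [(tstep i).1])]
      linarith [(tstep i).2]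
    have : dist (h (t i)) (h (t (i+1))) ≤ 1 := le_trans hd habs
    have := mul_le_mul_of_nonneg_left this hΛ0
    calc dist (c i) (c (i+1)) ≤ Λ * dist (h (t i)) (h (t (i+1))) + E := hup
      _ ≤ Λ * 1 + E := by linarith
      _ = Λ + E := by ring
  have hchlow : ∀ i j : ℕ, i ≤ j → j ≤ n →
      (1/Λ) * ((j:ℝ) - i) - (E + 2 + κ) ≤ dist (c i) (c j) := by
    intro i j hij hjn
    have hlo := (hφ (h (t i)) (h (t j))).1
    have hd := (hpath (t i) (htmem i) (t j) (htmem j)).1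
    have habs : (j:ℝ) - i - 2 ≤ |t i - t j| := by
      have h1 : t j - t i ≥ ((j:ℝ) - 2) - i := by
        have := tlow j hjn
        have := thigh i
        linarith
      calc (j:ℝ) - i - 2 ≤ t j - t i := by linarith
        _ ≤ |t i - t j| := by rw [abs_sub_comm]; exact le_abs_self _
    have hstep1 : (j:ℝ) - i - 2 - κ ≤ dist (h (t i)) (h (t j)) := by linarith
    have hstep2 : (1/Λ) * ((j:ℝ) - i - 2 - κ) ≤ (1/Λ) * dist (h (t i)) (h (t j)) :=
      mul_le_mul_of_nonneg_left hstep1 (by positivity)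
    have hstep3 : (1/Λ) * ((j:ℝ) - i) - (2 + κ)/Λ = (1/Λ) * ((j:ℝ) - i - 2 - κ) := by
      field_simp
      ring
    have hstep4 : (2 + κ)/Λ ≤ 2 + κ := div_le_self (by linarith) hΛ
    calc (1/Λ) * ((j:ℝ) - i) - (E + 2 + κ)
        = (1/Λ) * ((j:ℝ) - i) - (2 + κ)/Λ - E - ((2 + κ) - (2 + κ)/Λ) := by ring
      _ ≤ (1/Λ) * ((j:ℝ) - i - 2 - κ) - E := by rw [← hstep3]; linarith
      _ ≤ (1/Λ) * dist (h (t i)) (h (t j)) - E := by linarith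
      _ ≤ dist (c i) (c j) := hlo
  have e1 : c 0 = φ (h 0) := by rw [hc]; simp only; rw [ht0]
  have e2 : c n = φ (h L) := by rw [hc]; simp only; rw [htn]
  have e3 : c n₁ = φ (h ℓs) := by rw [hc]; simp only; rw [htn1]
  rw [← e1, ← e2, ← e3]
  rw [← e1, ← e2] at hγ
  exact hM Y geo hyp n c hchstep hchlow γ hγ n₁ (by omega)

/-- Concatenation of two geodesics with a cross lower bound is an almost-geodesic path. -/
lemma concat_path {X : Type} [MetricSpace X] {τ ρ : ℝ → X} {p q z : X}
    (hτ : IsGeodesicSeg τ p q) (hρ : IsGeodesicSeg ρ q z) {κ : ℝ} (hκ : 0 ≤ κ)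
    (hcross : ∀ s ∈ Icc (0:ℝ) (dist p q), ∀ t ∈ Icc (0:ℝ) (dist q z),
      (dist p q - s) + t - κ ≤ dist (τ s) (ρ t)) :
    ∃ h : ℝ → X, h 0 = p ∧ h (dist p q + dist q z) = z ∧ h (dist p q) = q ∧
      ∀ ℓ₁ ∈ Icc (0:ℝ) (dist p q + dist q z), ∀ ℓ₂ ∈ Icc (0:ℝ) (dist p q + dist q z),
        |ℓ₁ - ℓ₂| - κ ≤ dist (h ℓ₁) (h ℓ₂) ∧ dist (h ℓ₁) (h ℓ₂) ≤ |ℓ₁ - ℓ₂| := by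
  set dpq := dist p q with hdpq
  set dqz := dist q z with hdqz
  have hdpq0 : 0 ≤ dpq := dist_nonneg
  have hdqz0 : 0 ≤ dqz := dist_nonneg
  set h : ℝ → X := fun ℓ => if ℓ ≤ dpq then τ ℓ else ρ (ℓ - dpq) with hh
  have h0 : h 0 = p := by simp only [hh]; rw [if_pos hdpq0]; exact hτ.1
  have hq' : h dpq = q := by simp only [hh]; rw [if_pos (le_refl _)]; exact hτ.2.1
  have hend : h (dpq + dqz) = z := by
    rcases eq_or_lt_of_le hdqz0 with he | he
    · simp only [hh]
      rw [if_pos (by linarith)]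
      have : dpq + dqz = dpq := by linarith
      rw [this, hτ.2.1]
      have : dist q z = 0 := by rw [← hdqz, ← he]
      exact (dist_eq_zero.mp this)
    · simp only [hh]
      rw [if_neg (by linarith)]
      have : dpq + dqz - dpq = dqz := by ring
      rw [this]
      exact hρ.2.1
  -- ordered two-point estimate
  have hord : ∀ ℓ₁ ∈ Icc (0:ℝ) (dpq + dqz), ∀ ℓ₂ ∈ Icc (0:ℝ) (dpq + dqz), ℓ₁ ≤ ℓ₂ →
      (ℓ₂ - ℓ₁) - κ ≤ dist (h ℓ₁) (h ℓ₂) ∧ dist (h ℓ₁) (h ℓ₂) ≤ ℓ₂ - ℓ₁ := by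
    intro ℓ₁ h₁ ℓ₂ h₂ hle
    by_cases hc₂ : ℓ₂ ≤ dpq
    · -- both on τ
      have hc₁ : ℓ₁ ≤ dpq := le_trans hle hc₂
      simp only [hh]
      rw [if_pos hc₁, if_pos hc₂]
      rw [hτ.2.2 ℓ₁ ⟨h₁.1, hc₁⟩ ℓ₂ ⟨h₂.1, hc₂⟩, abs_of_nonpos (by linarith)]
      constructor <;> linarith
    · by_cases hc₁ : ℓ₁ ≤ dpq
      · -- crossing
        simp only [hh]
        rw [if_pos hc₁, if_neg hc₂]
        push_neg at hc₂
        have ht₂ : ℓ₂ - dpq ∈ Icc (0:ℝ) dqz := ⟨by linarith, by linarith [h₂.2]⟩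
        have hlow := hcross ℓ₁ ⟨h₁.1, hc₁⟩ (ℓ₂ - dpq) ht₂
        constructor
        · calc (ℓ₂ - ℓ₁) - κ = (dpq - ℓ₁) + (ℓ₂ - dpq) - κ := by ring
            _ ≤ dist (τ ℓ₁) (ρ (ℓ₂ - dpq)) := hlow
        · have htq : dist (τ ℓ₁) q = dpq - ℓ₁ := geo_dist_to_end hτ ⟨h₁.1, hc₁⟩
          have hqρ : dist q (ρ (ℓ₂ - dpq)) = ℓ₂ - dpq := geo_dist_from_start hρ ht₂
          calc dist (τ ℓ₁) (ρ (ℓ₂ - dpq)) ≤ dist (τ ℓ₁) q + dist q (ρ (ℓ₂ - dpq)) :=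
              dist_triangle _ _ _
            _ = ℓ₂ - ℓ₁ := by rw [htq, hqρ]; ring
      · -- both on ρ
        simp only [hh]
        rw [if_neg hc₁, if_neg hc₂]
        push_neg at hc₁ hc₂
        have ht₁ : ℓ₁ - dpq ∈ Icc (0:ℝ) dqz := ⟨by linarith, by linarith [h₁.2]⟩
        have ht₂ : ℓ₂ - dpq ∈ Icc (0:ℝ) dqz := ⟨by linarith, by linarith [h₂.2]⟩
        rw [hρ.2.2 _ ht₁ _ ht₂, abs_of_nonpos (by linarith)]
        constructor <;> linarith
  refine ⟨h, h0, hend, hq', ?_⟩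
  intro ℓ₁ h₁ ℓ₂ h₂
  rcases le_total ℓ₁ ℓ₂ with hle | hle
  · have := hord ℓ₁ h₁ ℓ₂ h₂ hle
    rw [abs_of_nonpos (by linarith)]
    constructor <;> [linarith [this.1]; linarith [this.2]]
  · have := hord ℓ₂ h₂ ℓ₁ h₁ hle
    rw [abs_of_nonneg (by linarith), dist_comm]
    constructor <;> [linarith [this.1]; linarith [this.2]]

/-- Cross bound for the projection configuration, via Lemma P. -/
lemma cross_bound {X : Type} [MetricSpace X] (geo : GeodesicMS X) {Δ : ℝ}
    (hyp : DeltaHyperbolic X Δ) {γ : ℝ → X} {a b : X} (hγ : IsGeodesicSeg γ a b)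
    {p q : X} (hqmem : q ∈ geodImage γ a b)
    (hq : ∀ x' ∈ geodImage γ a b, dist p q ≤ dist p x')
    {τ : ℝ → X} (hτ : IsGeodesicSeg τ p q) {ρ : ℝ → X} {x' : X}
    (hρ : IsGeodesicSeg ρ q x') (hρim : ∀ t ∈ Icc (0:ℝ) (dist q x'), ρ t ∈ geodImage γ a b) :
    ∀ s ∈ Icc (0:ℝ) (dist p q), ∀ t ∈ Icc (0:ℝ) (dist q x'),
      (dist p q - s) + t - 6*Δ ≤ dist (τ s) (ρ t) := by
  intro s hs t ht
  have h1 := lemP geo hyp hγ hqmem hq (ρ t) (hρim t ht)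
  have h2 : dist q (ρ t) = t := geo_dist_from_start hρ ht
  have h3 : dist p (τ s) = s := geo_dist_from_start hτ hs
  have h4 : dist p (ρ t) ≤ dist p (τ s) + dist (τ s) (ρ t) := dist_triangle _ _ _
  linarith

/-- Tripod lemma: two points close to all three sides of a geodesic triangle are close
to each other. -/
lemma lemT {Y : Type} [MetricSpace Y] {A B P : Y} {g1 g2 g3 : ℝ → Y}
    (h1 : IsGeodesicSeg g1 A B) (h2 : IsGeodesicSeg g2 P A) (h3 : IsGeodesicSeg g3 P B)
    {D : ℝ} (hD : 0 ≤ D) {u v : Y}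
    (hu1 : ∃ w ∈ geodImage g1 A B, dist u w ≤ D)
    (hu2 : ∃ w ∈ geodImage g2 P A, dist u w ≤ D)
    (hu3 : ∃ w ∈ geodImage g3 P B, dist u w ≤ D)
    (hv1 : ∃ w ∈ geodImage g1 A B, dist v w ≤ D)
    (hv2 : ∃ w ∈ geodImage g2 P A, dist v w ≤ D)
    (hv3 : ∃ w ∈ geodImage g3 P B, dist v w ≤ D) :
    dist u v ≤ 7*D := by
  -- Gromov-product style bounds for a point near all three sides
  have hGP : ∀ x : Y, (∃ w ∈ geodImage g1 A B, dist x w ≤ D) →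
      (∃ w ∈ geodImage g2 P A, dist x w ≤ D) →
      (∃ w ∈ geodImage g3 P B, dist x w ≤ D) →
      dist P A + dist A B - dist P B - 2*D ≤ 2 * dist x A ∧
      2 * dist x A ≤ dist P A + dist A B - dist P B + 4*D := by
    intro x hx1 hx2 hx3
    obtain ⟨w1, ⟨s1, hs1, rfl⟩, hd1⟩ := hx1
    obtain ⟨w2, ⟨s2, hs2, rfl⟩, hd2⟩ := hx2
    obtain ⟨w3, ⟨s3, hs3, rfl⟩, hd3⟩ := hx3
    have e1a : dist A (g1 s1) = s1 := geo_dist_from_start h1 hs1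
    have e1b : dist (g1 s1) B = dist A B - s1 := geo_dist_to_end h1 hs1
    have e2a : dist P (g2 s2) = s2 := geo_dist_from_start h2 hs2
    have e2b : dist (g2 s2) A = dist P A - s2 := geo_dist_to_end h2 hs2
    have e3a : dist P (g3 s3) = s3 := geo_dist_from_start h3 hs3
    have e3b : dist (g3 s3) B = dist P B - s3 := geo_dist_to_end h3 hs3
    -- upper bounds on pairwise sums
    have t1 : dist x A + dist x B ≤ dist A B + 2*D := by
      have p1 : dist x A ≤ dist x (g1 s1) + dist (g1 s1) A := dist_triangle _ _ _
      have p2 : dist x B ≤ dist x (g1 s1) + dist (g1 s1) B := dist_triangle _ _ _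
      have p3 : dist (g1 s1) A = s1 := by rw [dist_comm]; exact e1a
      linarith
    have t2 : dist x P + dist x A ≤ dist P A + 2*D := by
      have p1 : dist x P ≤ dist x (g2 s2) + dist (g2 s2) P := dist_triangle _ _ _
      have p2 : dist x A ≤ dist x (g2 s2) + dist (g2 s2) A := dist_triangle _ _ _
      have p3 : dist (g2 s2) P = s2 := by rw [dist_comm]; exact e2a
      linarith
    have t3 : dist x P + dist x B ≤ dist P B + 2*D := by
      have p1 : dist x P ≤ dist x (g3 s3) + dist (g3 s3) P := dist_triangle _ _ _
      have p2 : dist x B ≤ dist x (g3 s3) + dist (g3 s3) B := dist_triangle _ _ _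
      have p3 : dist (g3 s3) P = s3 := by rw [dist_comm]; exact e3a
      linarith
    -- triangle inequality lower bounds
    have l1 : dist A B ≤ dist x A + dist x B := by
      have := dist_triangle A x B
      rw [dist_comm A x] at this
      linarith
    have l2 : dist P A ≤ dist x P + dist x A := by
      have := dist_triangle P x A
      rw [dist_comm P x] at this
      linarith
    have l3 : dist P B ≤ dist x P + dist x B := by
      have := dist_triangle P x B
      rw [dist_comm P x] at this
      linarith
    constructor <;> linarith
  have hu := hGP u hu1 hu2 hu3
  have hv := hGP v hv1 hv2 hv3
  have hαdiff : |dist u A - dist v A| ≤ 3*D := by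
    rw [abs_le]
    constructor <;> linarith [hu.1, hu.2, hv.1, hv.2]
  -- now use the side [P,A]
  obtain ⟨w2u, ⟨su, hsu, rfl⟩, hdu⟩ := hu2
  obtain ⟨w2v, ⟨sv, hsv, rfl⟩, hdv⟩ := hv2
  have eua : dist (g2 su) A = dist P A - su := geo_dist_to_end h2 hsu
  have eva : dist (g2 sv) A = dist P A - sv := geo_dist_to_end h2 hsv
  have huA1 : dist u A ≤ D + (dist P A - su) := by
    have := dist_triangle u (g2 su) A
    linarith
  have huA2 : dist P A - su ≤ dist u A + D := by
    have := dist_triangle (g2 su) u A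
    rw [dist_comm (g2 su) u] at this
    linarith
  have hvA1 : dist v A ≤ D + (dist P A - sv) := by
    have := dist_triangle v (g2 sv) A
    linarith
  have hvA2 : dist P A - sv ≤ dist v A + D := by
    have := dist_triangle (g2 sv) v A
    rw [dist_comm (g2 sv) v] at this
    linarith
  have hsdiff : |su - sv| ≤ 5*D := by
    rw [abs_le] at hαdiff ⊢
    constructor <;> linarith [hαdiff.1, hαdiff.2]
  have hduv : dist (g2 su) (g2 sv) = |su - sv| := h2.2.2 su hsu sv hsv
  have hfin : dist u v ≤ dist u (g2 su) + dist (g2 su) (g2 sv) + dist (g2 sv) v :=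
    dist_triangle4 _ _ _ _
  have hcm : dist (g2 sv) v = dist v (g2 sv) := dist_comm _ _
  rw [hduv] at hfin
  linarith [hsdiff]


lemma hyp_mono {X : Type} [MetricSpace X] {δ δ' : ℝ} (h : δ ≤ δ') (hyp : DeltaHyperbolic X δ) :
    DeltaHyperbolic X δ' := by
  intro x y z γ₁ γ₂ γ₃ h₁ h₂ h₃ pt hpt
  obtain ⟨w, hw, hd⟩ := hyp x y z γ₁ γ₂ γ₃ h₁ h₂ h₃ pt hpt
  exact ⟨w, hw, le_trans hd h⟩

/-- Quasi-isometries and nearest-point projections almost commute: given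
δ-hyperbolic geodesic metric spaces `Y₁`, `Y₂`, a geodesic segment `μ₁` in `Y₁` joining `a`
and `b`, a point `p ∈ Y₁` with `q` a nearest point of `μ₁` to `p`, a (K,ε)-quasi-isometric
embedding `φ : Y₁ → Y₂`, a geodesic segment `μ₂` in `Y₂` joining `φ a` and `φ b`, and `r`
a nearest point of `μ₂` to `φ p`, we have `d₂(r, φ q) ≤ C₄` for a constant `C₄` depending
only on K, ε and δ. -/
theorem qi_almost_commutes_with_projection (δ K ε : ℝ) :
    ∃ C₄ : ℝ, 0 < C₄ ∧
      ∀ (Y₁ Y₂ : Type) [MetricSpace Y₁] [MetricSpace Y₂],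
        GeodesicMS Y₁ → DeltaHyperbolic Y₁ δ → GeodesicMS Y₂ → DeltaHyperbolic Y₂ δ →
        ∀ (a b p q : Y₁) (γ₁ : ℝ → Y₁), IsGeodesicSeg γ₁ a b →
          q ∈ geodImage γ₁ a b → (∀ x ∈ geodImage γ₁ a b, dist p q ≤ dist p x) →
        ∀ φ : Y₁ → Y₂,
          (∀ u v : Y₁, (1 / K) * dist u v - ε ≤ dist (φ u) (φ v) ∧
            dist (φ u) (φ v) ≤ K * dist u v + ε) →
        ∀ (r : Y₂) (γ₂ : ℝ → Y₂), IsGeodesicSeg γ₂ (φ a) (φ b) →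
          r ∈ geodImage γ₂ (φ a) (φ b) →
          (∀ x ∈ geodImage γ₂ (φ a) (φ b), dist (φ p) r ≤ dist (φ p) x) →
          dist r (φ q) ≤ C₄ := by
  have habsδ : 0 ≤ |δ| := abs_nonneg δ
  have habsK : 0 ≤ |K| := abs_nonneg K
  have habsε : 0 ≤ |ε| := abs_nonneg ε
  have hΔ1 : 1 ≤ |δ| + 1 := by linarith
  have hΛ1 : 1 ≤ |K| + 1 := by linarith
  have hE0 : (0:ℝ) ≤ |ε| + 1 := by linarith
  obtain ⟨M, hMpos, hMorse⟩ := morse_pt (|δ| + 1) (|K| + 1) (|ε| + 1) (6*(|δ| + 1))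
    hΔ1 hΛ1 hE0 (by linarith)
  refine ⟨7*M + 2*|ε| + 1, by linarith, ?_⟩
  intro Y₁ Y₂ _ _ geo₁ hyp₁ geo₂ hyp₂ a b p q γ₁ hγ₁ hqmem hq φ hφ r γ₂ hγ₂ hrmem hr
  have hε0 : 0 ≤ ε := by
    have := (hφ p p).2
    simp only [dist_self] at this
    linarith
  by_cases hK : 0 < K
  swap
  · -- degenerate case K ≤ 0 : the image of φ has diameter ≤ ε
    push_neg at hK
    have hφb : ∀ u v : Y₁, dist (φ u) (φ v) ≤ ε := by
      intro u v
      have h2 := (hφ u v).2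
      nlinarith [dist_nonneg (x := u) (y := v)]
    have h1 : dist (φ p) r ≤ ε := le_trans (hr (φ a) (geo_x_mem hγ₂)) (hφb p a)
    have h2 : dist (φ p) (φ q) ≤ ε := hφb p q
    have h3 := dist_triangle r (φ p) (φ q)
    rw [dist_comm r (φ p)] at h3
    have hεabs : ε ≤ |ε| := le_abs_self ε
    linarith
  · -- main case K > 0
    have hKΛ : K ≤ |K| + 1 := by linarith [le_abs_self K]
    have hεE : ε ≤ |ε| + 1 := by linarith [le_abs_self ε]
    have hδΔ : δ ≤ |δ| + 1 := by linarith [le_abs_self δ]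
    have hyp₁' : DeltaHyperbolic Y₁ (|δ| + 1) := hyp_mono hδΔ hyp₁
    have hyp₂' : DeltaHyperbolic Y₂ (|δ| + 1) := hyp_mono hδΔ hyp₂
    have hφ' : ∀ u v : Y₁, (1/(|K| + 1)) * dist u v - (|ε| + 1) ≤ dist (φ u) (φ v) ∧
        dist (φ u) (φ v) ≤ (|K| + 1) * dist u v + (|ε| + 1) := by
      intro u v
      obtain ⟨hl, hu⟩ := hφ u v
      have hd0 : (0:ℝ) ≤ dist u v := dist_nonneg
      constructor
      · have hinv : 1/(|K| + 1) ≤ 1/K := one_div_le_one_div_of_le hK hKΛ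
        have := mul_le_mul_of_nonneg_right hinv hd0
        linarith
      · have := mul_le_mul_of_nonneg_right hKΛ hd0
        linarith
    have hid : ∀ u v : Y₂, (1/(|K| + 1)) * dist u v - (|ε| + 1) ≤ dist (id u) (id v) ∧
        dist (id u) (id v) ≤ (|K| + 1) * dist u v + (|ε| + 1) := by
      intro u v
      simp only [id_eq]
      have hd0 : (0:ℝ) ≤ dist u v := dist_nonneg
      constructor
      · have h1 : (1/(|K| + 1)) * dist u v ≤ 1 * dist u v := by
          apply mul_le_mul_of_nonneg_right _ hd0
          rw [div_le_one (by linarith)]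
          linarith
        linarith
      · nlinarith
    obtain ⟨uq, huq, hquq⟩ := hqmem
    obtain ⟨ur, hur, hrur⟩ := hrmem
    have hqmem' : q ∈ geodImage γ₁ a b := ⟨uq, huq, hquq⟩
    have hrmem' : r ∈ geodImage γ₂ (φ a) (φ b) := ⟨ur, hur, hrur⟩
    -- (a) : φ q is close to γ₂
    have hva : ∃ w ∈ geodImage γ₂ (φ a) (φ b), dist (φ q) w ≤ M := by
      have hpath : ∀ ℓ₁ ∈ Icc (0:ℝ) (dist a b), ∀ ℓ₂ ∈ Icc (0:ℝ) (dist a b),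
          |ℓ₁ - ℓ₂| - 6*(|δ| + 1) ≤ dist (γ₁ ℓ₁) (γ₁ ℓ₂) ∧
          dist (γ₁ ℓ₁) (γ₁ ℓ₂) ≤ |ℓ₁ - ℓ₂| := by
        intro ℓ₁ h₁ ℓ₂ h₂
        rw [hγ₁.2.2 ℓ₁ h₁ ℓ₂ h₂]
        exact ⟨by linarith, le_refl _⟩
      have hγ₂' : IsGeodesicSeg γ₂ (φ (γ₁ 0)) (φ (γ₁ (dist a b))) := by
        rw [hγ₁.1, hγ₁.2.1]; exact hγ₂
      have := hMorse Y₁ Y₂ geo₂ hyp₂' γ₁ (dist a b) uq dist_nonneg huq hpath φ hφ' γ₂ hγ₂'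
      rw [hγ₁.1, hγ₁.2.1, hquq] at this
      exact this
    -- geodesics [φp, φa] and [φp, φb]
    obtain ⟨σPA, hσPA⟩ := geo₂ (φ p) (φ a)
    obtain ⟨σPB, hσPB⟩ := geo₂ (φ p) (φ b)
    -- helper for (b), (c) : the image of the concatenated path p → q → x'
    have hbc : ∀ (x' : Y₁) (ρ : ℝ → Y₁), IsGeodesicSeg ρ q x' →
        (∀ t ∈ Icc (0:ℝ) (dist q x'), ρ t ∈ geodImage γ₁ a b) →
        ∀ σ : ℝ → Y₂, IsGeodesicSeg σ (φ p) (φ x') →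
        ∃ w ∈ geodImage σ (φ p) (φ x'), dist (φ q) w ≤ M := by
      intro x' ρ hρ hρim σ hσ
      obtain ⟨τ₁, hτ₁⟩ := geo₁ p q
      have hcross := cross_bound geo₁ hyp₁' hγ₁ hqmem' hq hτ₁ hρ hρim
      obtain ⟨hf, hh0, hhend, hhq, hhpath⟩ := concat_path hτ₁ hρ (by linarith) hcross
      have hσ' : IsGeodesicSeg σ (φ (hf 0)) (φ (hf (dist p q + dist q x'))) := by
        rw [hh0, hhend]; exact hσ
      have hmemq : dist p q ∈ Icc (0:ℝ) (dist p q + dist q x') :=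
        ⟨dist_nonneg, by linarith [dist_nonneg (x := q) (y := x')]⟩
      have := hMorse Y₁ Y₂ geo₂ hyp₂' hf (dist p q + dist q x') (dist p q)
        (by linarith [dist_nonneg (x := p) (y := q), dist_nonneg (x := q) (y := x')])
        hmemq hhpath φ hφ' σ hσ'
      rw [hh0, hhend, hhq] at this
      exact this
    -- (b) : φ q is close to σPA
    have hvb : ∃ w ∈ geodImage σPA (φ p) (φ a), dist (φ q) w ≤ M := by
      have h0m : (0:ℝ) ∈ Icc (0:ℝ) (dist a b) := ⟨le_refl _, dist_nonneg⟩
      obtain ⟨ρ, hρ, hρim, -⟩ := geo_sub hγ₁ huq h0m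
      rw [hquq, hγ₁.1] at hρ hρim
      exact hbc a ρ hρ hρim σPA hσPA
    -- (c) : φ q is close to σPB
    have hvc : ∃ w ∈ geodImage σPB (φ p) (φ b), dist (φ q) w ≤ M := by
      have hLm : dist a b ∈ Icc (0:ℝ) (dist a b) := ⟨dist_nonneg, le_refl _⟩
      obtain ⟨ρ, hρ, hρim, -⟩ := geo_sub hγ₁ huq hLm
      rw [hquq, hγ₁.2.1] at hρ hρim
      exact hbc b ρ hρ hρim σPB hσPB
    -- helper for (e), (f) in Y₂ with φ = id
    have hef : ∀ (x' : Y₂) (ρ : ℝ → Y₂), IsGeodesicSeg ρ r x' →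
        (∀ t ∈ Icc (0:ℝ) (dist r x'), ρ t ∈ geodImage γ₂ (φ a) (φ b)) →
        ∀ σ : ℝ → Y₂, IsGeodesicSeg σ (φ p) x' →
        ∃ w ∈ geodImage σ (φ p) x', dist r w ≤ M := by
      intro x' ρ hρ hρim σ hσ
      obtain ⟨τ₂, hτ₂⟩ := geo₂ (φ p) r
      have hcross := cross_bound geo₂ hyp₂' hγ₂ hrmem' hr hτ₂ hρ hρim
      obtain ⟨hf, hh0, hhend, hhq, hhpath⟩ := concat_path hτ₂ hρ (by linarith) hcross
      have hσ' : IsGeodesicSeg σ (id (hf 0)) (id (hf (dist (φ p) r + dist r x'))) := by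
        simp only [id_eq]
        rw [hh0, hhend]; exact hσ
      have hmemq : dist (φ p) r ∈ Icc (0:ℝ) (dist (φ p) r + dist r x') :=
        ⟨dist_nonneg, by linarith [dist_nonneg (x := r) (y := x')]⟩
      have := hMorse Y₂ Y₂ geo₂ hyp₂' hf (dist (φ p) r + dist r x') (dist (φ p) r)
        (by linarith [dist_nonneg (x := φ p) (y := r), dist_nonneg (x := r) (y := x')])
        hmemq hhpath id hid σ hσ'
      simp only [id_eq] at this
      rw [hh0, hhend, hhq] at this
      exact this
    -- (e) : r is close to σPA
    have hue : ∃ w ∈ geodImage σPA (φ p) (φ a), dist r w ≤ M := by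
      have h0m : (0:ℝ) ∈ Icc (0:ℝ) (dist (φ a) (φ b)) := ⟨le_refl _, dist_nonneg⟩
      obtain ⟨ρ, hρ, hρim, -⟩ := geo_sub hγ₂ hur h0m
      rw [hrur, hγ₂.1] at hρ hρim
      exact hef (φ a) ρ hρ hρim σPA hσPA
    -- (f) : r is close to σPB
    have huf : ∃ w ∈ geodImage σPB (φ p) (φ b), dist r w ≤ M := by
      have hLm : dist (φ a) (φ b) ∈ Icc (0:ℝ) (dist (φ a) (φ b)) := ⟨dist_nonneg, le_refl _⟩
      obtain ⟨ρ, hρ, hρim, -⟩ := geo_sub hγ₂ hur hLm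
      rw [hrur, hγ₂.2.1] at hρ hρim
      exact hef (φ b) ρ hρ hρim σPB hσPB
    -- (d) : r is on γ₂
    have hud : ∃ w ∈ geodImage γ₂ (φ a) (φ b), dist r w ≤ M :=
      ⟨r, hrmem', by simp; linarith⟩
    -- conclude via the tripod lemma
    have := lemT hγ₂ hσPA hσPB (le_of_lt hMpos) hud hue huf hva hvb hvc
    linarith
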